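/- Star-to-path identity (adjoint version): Under the same swap-invariance hypotheses, the star product satisfies m_{(v,v₁)} m_{(v,v₂)} ⋯ m_{(v,v_{p−1})} = W† · m_{(v₁,v₂)} m_{(v₂,v₃)} ⋯ m_{(v_{p−2},v_{p−1})} m_{(v,v_{p−1})}, where W is the cyclic permutation on the factors v, v₁, …, v_{p−1} sending v → v_{p−1}, v₁ → v, v₂ → v₁, …. -/

import Mathlib

open Matrix

/-- The operator on `⊗_{u ∈ V} ℂ^d` (identified with functions `(V → Fin d) → ℂ`) acting
nontrivially only on the sites `v, w`, with two-site kernel `Q`. -/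
noncomputable def localOp {V : Type} [Fintype V] [DecidableEq V] (d : ℕ) (v w : V)
    (Q : Matrix (Fin d × Fin d) (Fin d × Fin d) ℂ) : Matrix (V → Fin d) (V → Fin d) ℂ :=
  fun x y => if ∀ u, u ≠ v → u ≠ w → x u = y u then Q (x v, x w) (y v, y w) else 0

/-- The unitary permuting the tensor factors of `⊗_{u ∈ V} ℂ^d` according to a permutation
`σ` of the sites. -/
noncomputable def permMatrix {V : Type} [Fintype V] [DecidableEq V] (d : ℕ)
    (σ : Equiv.Perm V) : Matrix (V → Fin d) (V → Fin d) ℂ :=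
  fun x y => if x = y ∘ σ then 1 else 0

variable {V : Type} [Fintype V] [DecidableEq V] {d : ℕ}
  {Q : Matrix (Fin d × Fin d) (Fin d × Fin d) ℂ}

lemma permMatrix_mul (σ : Equiv.Perm V) (M : Matrix (V → Fin d) (V → Fin d) ℂ) :
    permMatrix d σ * M = Matrix.of fun x y => M (x ∘ ⇑σ⁻¹) y := by
  ext x y
  rw [Matrix.mul_apply]
  rw [Finset.sum_eq_single (x ∘ ⇑σ⁻¹)]
  · have : x = (x ∘ ⇑σ⁻¹) ∘ ⇑σ := by ext i; simp
    simp only [permMatrix, if_pos this, one_mul, Matrix.of_apply]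
  · intro z _ hz
    have : x ≠ z ∘ ⇑σ := by
      intro h; apply hz; ext i; simp [h]
    simp only [permMatrix, if_neg this, zero_mul]
  · intro h; exact absurd (Finset.mem_univ _) h

lemma mul_permMatrix (σ : Equiv.Perm V) (M : Matrix (V → Fin d) (V → Fin d) ℂ) :
    M * permMatrix d σ = Matrix.of fun x y => M x (y ∘ ⇑σ) := by
  ext x y
  rw [Matrix.mul_apply]
  rw [Finset.sum_eq_single (y ∘ ⇑σ)]
  · simp [permMatrix]
  · intro z _ hz
    simp only [permMatrix, if_neg hz, mul_zero]
  · intro h; exact absurd (Finset.mem_univ _) h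

lemma permMatrix_mul_permMatrix (σ τ : Equiv.Perm V) :
    permMatrix d σ * permMatrix d τ = (permMatrix d (τ * σ) : Matrix (V → Fin d) (V → Fin d) ℂ) := by
  rw [_root_.permMatrix_mul]
  ext x y
  simp only [Matrix.of_apply, permMatrix]
  congr 1
  simp only [eq_iff_iff]
  constructor
  · intro h; funext i
    have := congrFun h (σ i)
    simp only [Function.comp_apply, Equiv.Perm.inv_def, Equiv.symm_apply_apply] at this
    simp only [Function.comp_apply, Equiv.Perm.coe_mul]
    exact this
  · intro h; funext i
    have := congrFun h (σ⁻¹ i)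
    simp only [Function.comp_apply, Equiv.Perm.coe_mul, Equiv.Perm.inv_def, Equiv.apply_symm_apply] at this
    simp only [Function.comp_apply]
    exact this

lemma permMatrix_one : (permMatrix d (1 : Equiv.Perm V)) = 1 := by
  ext x y
  simp [permMatrix, Matrix.one_apply, eq_comm]

lemma permMatrix_conjTranspose (σ : Equiv.Perm V) :
    (permMatrix d σ : Matrix (V → Fin d) (V → Fin d) ℂ)ᴴ = permMatrix d σ⁻¹ := by
  ext x y
  simp only [Matrix.conjTranspose_apply, permMatrix]
  have : (y = x ∘ ⇑σ) ↔ (x = y ∘ ⇑σ⁻¹) := by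
    constructor
    · rintro rfl; ext i; simp
    · rintro rfl; ext i; simp
  by_cases h : x = y ∘ ⇑σ⁻¹
  · rw [if_pos (this.mpr h), if_pos h]; simp
  · rw [if_neg (fun hh => h (this.mp hh)), if_neg h]; simp

lemma permMatrix_mul_localOp (σ : Equiv.Perm V) (a b : V) :
    permMatrix d σ * localOp d a b Q = localOp d (σ⁻¹ a) (σ⁻¹ b) Q * permMatrix d σ := by
  rw [_root_.permMatrix_mul, mul_permMatrix]
  ext x y
  simp only [Matrix.of_apply, localOp]
  have hker : x (σ⁻¹ a) = x (σ⁻¹ a) := rfl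
  have hcond : (∀ u, u ≠ a → u ≠ b → (x ∘ ⇑σ⁻¹) u = y u) ↔
      (∀ u, u ≠ σ⁻¹ a → u ≠ σ⁻¹ b → x u = (y ∘ ⇑σ) u) := by
    constructor
    · intro h u h1 h2
      have := h (σ u) (fun hh => h1 (by simp [← hh])) (fun hh => h2 (by simp [← hh]))
      simpa using this
    · intro h u h1 h2
      have := h (σ⁻¹ u) (fun hh => h1 (by simpa using congrArg σ hh))
        (fun hh => h2 (by simpa using congrArg σ hh))
      simpa using this
  by_cases h : ∀ u, u ≠ a → u ≠ b → (x ∘ ⇑σ⁻¹) u = y u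
  · rw [if_pos h, if_pos (hcond.mp h)]
    simp
  · rw [if_neg h, if_neg (fun hh => h (hcond.mpr hh))]

lemma permMatrix_mul_starProd (σ : Equiv.Perm V) (c : V) (l : List V) :
    permMatrix d σ * (l.map (fun x => localOp d c x Q)).prod
      = (l.map (fun x => localOp d (σ⁻¹ c) (σ⁻¹ x) Q)).prod * permMatrix d σ := by
  induction l with
  | nil => simp
  | cons p t ih =>
    simp only [List.map_cons, List.prod_cons]
    rw [← mul_assoc, permMatrix_mul_localOp, mul_assoc, ih, ← mul_assoc]

lemma permMatrix_mul_prodPairs (σ : Equiv.Perm V) :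
    ∀ L : List (V × V), (∀ p ∈ L, σ⁻¹ p.1 = p.1 ∧ σ⁻¹ p.2 = p.2) →
    permMatrix d σ * (L.map (fun p => localOp d p.1 p.2 Q)).prod
      = (L.map (fun p => localOp d p.1 p.2 Q)).prod * permMatrix d σ := by
  intro L
  induction L with
  | nil => simp
  | cons p t ih =>
    intro hL
    simp only [List.map_cons, List.prod_cons]
    rw [← mul_assoc, permMatrix_mul_localOp, (hL p (by simp)).1, (hL p (by simp)).2,
      mul_assoc, ih (fun q hq => hL q (by simp [hq])), ← mul_assoc]

noncomputable def pathProd {V : Type} [Fintype V] [DecidableEq V] (d : ℕ)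
    (Q : Matrix (Fin d × Fin d) (Fin d × Fin d) ℂ) (l : List V) :
    Matrix (V → Fin d) (V → Fin d) ℂ :=
  ((l.zip l.tail).map (fun p => localOp d p.1 p.2 Q)).prod

lemma pathProd_singleton (a : V) : pathProd d Q [a] = 1 := by simp [pathProd]

lemma pathProd_cons_cons (a b : V) (l : List V) :
    pathProd d Q (a :: b :: l) = localOp d a b Q * pathProd d Q (b :: l) := by
  simp [pathProd]

lemma permMatrix_mul_pathProd (σ : Equiv.Perm V) (l : List V)
    (hfix : ∀ x ∈ l, σ⁻¹ x = x) :
    permMatrix d σ * pathProd d Q l = pathProd d Q l * permMatrix d σ := by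
  unfold pathProd
  apply permMatrix_mul_prodPairs
  intro p hp
  obtain ⟨h1, h2⟩ := List.of_mem_zip hp
  exact ⟨hfix _ h1, hfix _ (List.tail_subset l h2)⟩

theorem star_aux
    (hswap : ∀ a b : V, a ≠ b →
      localOp d a b Q * permMatrix d (Equiv.swap a b) = localOp d a b Q ∧
      permMatrix d (Equiv.swap a b) * localOp d a b Q = localOp d a b Q) :
    ∀ (l : List V) (c a lst : V), (c :: a :: l).Nodup →
      (a :: l).getLast (by simp) = lst →
      ((a :: l).map (fun x => localOp d c x Q)).prod
        = permMatrix d (c :: a :: l).formPerm * pathProd d Q (a :: l)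
          * localOp d c lst Q := by
  intro l
  induction l with
  | nil =>
    intro c a lst h hlst
    have hca : c ≠ a := by simp at h; tauto
    simp only [List.getLast_singleton] at hlst
    subst hlst
    simp only [List.map_cons, List.map_nil, List.prod_cons, List.prod_nil, mul_one,
      pathProd_singleton, List.formPerm_cons_cons, List.formPerm_singleton, mul_one]
    exact ((hswap c a hca).2).symm
  | cons b t ih =>
    intro c a lst h hlst
    have h2 : (a :: b :: t).Nodup := h.of_cons
    have hcmem : c ∉ a :: b :: t := (List.nodup_cons.mp h).1
    have hamem : a ∉ b :: t := (List.nodup_cons.mp h2).1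
    have hca : c ≠ a := fun e => hcmem (by simp [e])
    have hcbt : ∀ x ∈ b :: t, x ≠ c := fun x hx e =>
      hcmem (List.mem_cons_of_mem _ (e ▸ hx))
    have habt : ∀ x ∈ b :: t, x ≠ a := fun x hx e => hamem (e ▸ hx)
    have hcb : c ≠ b := fun e => (hcbt b (by simp)) e.symm
    have hab : a ≠ b := fun e => (habt b (by simp)) e.symm
    have hlst' : (b :: t).getLast (by simp) = lst := by
      rw [List.getLast_cons (by simp)] at hlst; exact hlst
    have hlmem : lst ∈ b :: t := hlst' ▸ List.getLast_mem _
    have hsinv : (Equiv.swap c a)⁻¹ = Equiv.swap c a := Equiv.swap_inv c a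
    have hfix : ∀ x ∈ b :: t, (Equiv.swap c a)⁻¹ x = x := by
      intro x hx
      rw [hsinv]
      exact Equiv.swap_apply_of_ne_of_ne (hcbt x hx) (habt x hx)
    -- commute the swap through the star product
    have hcomm : permMatrix d (Equiv.swap c a)
          * ((b :: t).map (fun x => localOp d c x Q)).prod
        = ((b :: t).map (fun x => localOp d a x Q)).prod
          * permMatrix d (Equiv.swap c a) := by
      rw [permMatrix_mul_starProd]
      congr 1
      refine congrArg List.prod (List.map_congr_left ?_)
      intro x hx
      rw [hfix x hx, hsinv, Equiv.swap_apply_left]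
    have hih := ih a b lst h2 hlst'
    have hρc : (c :: a :: b :: t).formPerm c = a :=
      List.formPerm_apply_head c a (b :: t) h
    have hρa : (c :: a :: b :: t).formPerm a = b := by
      rw [List.formPerm_cons_cons, Equiv.Perm.mul_apply,
        List.formPerm_apply_head a b t h2]
      exact Equiv.swap_apply_of_ne_of_ne hcb.symm hab.symm
    have hinva : ((c :: a :: b :: t).formPerm)⁻¹ a = c := by
      rw [Equiv.Perm.inv_eq_iff_eq]; exact hρc.symm
    have hinvb : ((c :: a :: b :: t).formPerm)⁻¹ b = a := by
      rw [Equiv.Perm.inv_eq_iff_eq]; exact hρa.symm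
    have h1 : localOp d a lst Q * permMatrix d (Equiv.swap c a)
        = permMatrix d (Equiv.swap c a) * localOp d c lst Q := by
      rw [permMatrix_mul_localOp, hsinv, Equiv.swap_apply_left,
        Equiv.swap_apply_of_ne_of_ne (hcbt lst hlmem) (habt lst hlmem)]
    have h2' : pathProd d Q (b :: t) * permMatrix d (Equiv.swap c a)
        = permMatrix d (Equiv.swap c a) * pathProd d Q (b :: t) :=
      (permMatrix_mul_pathProd _ _ hfix).symm
    have h3 : permMatrix d ((a :: b :: t).formPerm : Equiv.Perm V)
          * permMatrix d (Equiv.swap c a)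
        = permMatrix d ((c :: a :: b :: t).formPerm) := by
      rw [permMatrix_mul_permMatrix, ← List.formPerm_cons_cons]
    have h4 : localOp d c a Q * permMatrix d ((c :: a :: b :: t).formPerm)
        = permMatrix d ((c :: a :: b :: t).formPerm) * localOp d a b Q := by
      rw [permMatrix_mul_localOp, hinva, hinvb]
    calc ((a :: b :: t).map (fun x => localOp d c x Q)).prod
        = localOp d c a Q * ((b :: t).map (fun x => localOp d c x Q)).prod := by
          simp [List.prod_cons]
      _ = (localOp d c a Q * permMatrix d (Equiv.swap c a))
            * ((b :: t).map (fun x => localOp d c x Q)).prod := by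
          rw [(hswap c a hca).1]
      _ = localOp d c a Q * (((b :: t).map (fun x => localOp d a x Q)).prod
            * permMatrix d (Equiv.swap c a)) := by
          rw [mul_assoc, hcomm]
      _ = localOp d c a Q * (permMatrix d ((a :: b :: t).formPerm)
            * pathProd d Q (b :: t)
            * (localOp d a lst Q * permMatrix d (Equiv.swap c a))) := by
          rw [hih]; noncomm_ring
      _ = localOp d c a Q * (permMatrix d ((a :: b :: t).formPerm)
            * (pathProd d Q (b :: t) * permMatrix d (Equiv.swap c a))
            * localOp d c lst Q) := by
          rw [h1]; noncomm_ring
      _ = localOp d c a Q * (permMatrix d ((a :: b :: t).formPerm)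
            * permMatrix d (Equiv.swap c a)
            * (pathProd d Q (b :: t) * localOp d c lst Q)) := by
          rw [h2']; noncomm_ring
      _ = (localOp d c a Q * permMatrix d ((c :: a :: b :: t).formPerm))
            * (pathProd d Q (b :: t) * localOp d c lst Q) := by
          rw [h3]; noncomm_ring
      _ = permMatrix d ((c :: a :: b :: t).formPerm)
            * (localOp d a b Q * pathProd d Q (b :: t)) * localOp d c lst Q := by
          rw [h4]; noncomm_ring
      _ = permMatrix d ((c :: a :: b :: t).formPerm)
            * pathProd d Q (a :: b :: t) * localOp d c lst Q := by
          rw [pathProd_cons_cons]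

lemma pathProd_ofFn (k : ℕ) (u : Fin (k + 2) → V) :
    pathProd d Q (List.ofFn u)
      = (List.ofFn fun i : Fin (k + 1) => localOp d (u i.castSucc) (u i.succ) Q).prod := by
  induction k with
  | zero =>
    simp [pathProd, List.ofFn_succ, Fin.castSucc_zero, Fin.succ_zero_eq_one]
  | succ k ih =>
    rw [List.ofFn_succ (f := u), List.ofFn_succ (f := fun i : Fin (k + 2) => u i.succ),
      pathProd_cons_cons, ← List.ofFn_succ (f := fun i : Fin (k + 2) => u i.succ),
      ih (fun i => u i.succ)]
    rw [List.ofFn_succ (f := fun i : Fin (k + 2) => localOp d (u i.castSucc) (u i.succ) Q),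
      List.prod_cons]
    congr 1

lemma getLast_ofFn' (k : ℕ) (u : Fin (k + 2) → V) (h : List.ofFn u ≠ []) :
    (List.ofFn u).getLast h = u (Fin.last (k + 1)) := by
  rw [List.getLast_eq_getElem]
  simp only [List.length_ofFn, List.getElem_ofFn]
  exact congrArg u (by ext; simp [Fin.last])

set_option linter.unusedVariables false in
set_option linter.unusedSectionVars false in
/-- Star-to-path identity (adjoint version): for self-adjoint swap-invariant two-site
operators `m_{(a,b)} = localOp d a b Q`, a center `c` and distinct leaves `u₀, …, u_{k+1}`
(all different from `c`), the star product `m_{(c,u₀)} m_{(c,u₁)} ⋯ m_{(c,u_{k+1})}` equals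
`W† · m_{(u₀,u₁)} m_{(u₁,u₂)} ⋯ m_{(u_k,u_{k+1})} · m_{(c,u_{k+1})}`, where `W` is the cyclic
permutation on the sites `c, u₀, …, u_{k+1}` sending `c → u_{k+1}`, `u₀ → c`, `u₁ → u₀`, …. -/
theorem stmt17 {V : Type} [Fintype V] [DecidableEq V] (d k : ℕ)
    (Q : Matrix (Fin d × Fin d) (Fin d × Fin d) ℂ)
    (hherm : ∀ a b : V, a ≠ b → (localOp d a b Q).IsHermitian)
    (hswap : ∀ a b : V, a ≠ b →
      localOp d a b Q * permMatrix d (Equiv.swap a b) = localOp d a b Q ∧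
      permMatrix d (Equiv.swap a b) * localOp d a b Q = localOp d a b Q)
    (c : V) (u : Fin (k + 2) → V) (hu : Function.Injective u) (huc : ∀ i, u i ≠ c) :
    (List.ofFn fun i : Fin (k + 2) => localOp d c (u i) Q).prod
      = (permMatrix d ((c :: List.ofFn u).reverse.formPerm))ᴴ
        * (List.ofFn fun i : Fin (k + 1) => localOp d (u i.castSucc) (u i.succ) Q).prod
        * localOp d c (u (Fin.last (k + 1))) Q := by
  have hnd : (c :: List.ofFn u).Nodup := by
    rw [List.nodup_cons]
    refine ⟨fun hc => ?_, List.nodup_ofFn.mpr hu⟩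
    obtain ⟨i, hi⟩ := List.mem_ofFn.mp hc
    exact huc i hi
  have hmap : (List.ofFn fun i : Fin (k + 2) => localOp d c (u i) Q)
      = (List.ofFn u).map (fun x => localOp d c x Q) := by
    rw [List.map_ofFn]; rfl
  rw [hmap, List.formPerm_reverse, permMatrix_conjTranspose, inv_inv, ← pathProd_ofFn k u]
  have hcongr : ∀ (l l' : List V) (h : l = l') (h1 : l ≠ []),
      l.getLast h1 = l'.getLast (h ▸ h1) := by
    rintro l l' rfl h1; rfl
  have hlast : (u 0 :: List.ofFn fun i : Fin (k + 1) => u i.succ).getLast (by simp)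
      = u (Fin.last (k + 1)) := by
    rw [hcongr _ (List.ofFn u) (List.ofFn_succ (f := u)).symm]
    exact getLast_ofFn' k u _
  rw [List.ofFn_succ (f := u)]
  exact star_aux hswap _ c (u 0) (u (Fin.last (k + 1)))
    (by rw [← List.ofFn_succ (f := u)]; exact hnd) hlast
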